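/- There is no object (A ⊆ B) in S(Λ) whose endomorphism ring is isomorphic to K × K for a field K; consequently the category S(Λ) admits no full additive embedding of mod K⟨X,Y⟩ (i.e., S(Λ) is not strictly K-wild) for any field K. -/

import Mathlib

open CategoryTheory

/-- The endomorphism ring of an object `(A ⊆ B)` of the submodule category `S(Λ)`:
the subring of `End_Λ(B)` of those endomorphisms preserving `A`. -/
def pairEnd (Λ : Type) [CommRing Λ] (B : Type) [AddCommGroup B] [Module Λ B]
    (A : Submodule Λ B) : Subring (Module.End Λ B) where
  carrier := {f | ∀ a ∈ A, f a ∈ A}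
  zero_mem' := by intro a ha; simpa using A.zero_mem
  one_mem' := by intro a ha; simpa using ha
  add_mem' := by
    intro f g hf hg a ha
    simpa [LinearMap.add_apply] using A.add_mem (hf a ha) (hg a ha)
  neg_mem' := by
    intro f hf a ha
    simpa [LinearMap.neg_apply] using A.neg_mem (hf a ha)
  mul_mem' := by
    intro f g hf hg a ha
    simpa [Module.End.mul_apply] using hf _ (hg a ha)

/-- An object of the submodule category `S(Λ)`: a finitely generated `Λ`-module
together with a distinguished submodule. -/
structure SObj (Λ : Type) [CommRing Λ] : Type 1 where
  carrier : Type
  [isAddCommGroup : AddCommGroup carrier]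
  [isModule : Module Λ carrier]
  fin : Module.Finite Λ carrier
  sub : Submodule Λ carrier

attribute [instance] SObj.isAddCommGroup SObj.isModule

/-- Morphisms in `S(Λ)`: `Λ`-linear maps on the ambient modules preserving the
distinguished submodules; they form an additive group. -/
def SHom {Λ : Type} [CommRing Λ] (M N : SObj Λ) :
    AddSubgroup (M.carrier →ₗ[Λ] N.carrier) where
  carrier := {f | ∀ a ∈ M.sub, f a ∈ N.sub}
  zero_mem' := by intro a ha; simpa using N.sub.zero_mem
  add_mem' := by
    intro f g hf hg a ha
    simpa [LinearMap.add_apply] using N.sub.add_mem (hf a ha) (hg a ha)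
  neg_mem' := by
    intro f hf a ha
    simpa [LinearMap.neg_apply] using N.sub.neg_mem (hf a ha)

/-- The submodule category `S(Λ)`. -/
instance SCat (Λ : Type) [CommRing Λ] : Category (SObj Λ) where
  Hom M N := ↥(SHom M N)
  id M := ⟨LinearMap.id, fun _ ha => ha⟩
  comp f g := ⟨g.1 ∘ₗ f.1, fun a ha => g.2 _ (f.2 a ha)⟩
  id_comp f := Subtype.ext (LinearMap.comp_id _)
  comp_id f := Subtype.ext (LinearMap.id_comp _)
  assoc f g h := Subtype.ext rfl

instance (Λ : Type) [CommRing Λ] : Preadditive (SObj Λ) where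
  homGroup M N := inferInstanceAs (AddCommGroup ↥(SHom M N))
  add_comp M N P f g h := Subtype.ext (LinearMap.comp_add _ _ _)
  comp_add M N P f g h := Subtype.ext (LinearMap.add_comp _ _ _)

/-- An object of the category `mod K⟨X,Y⟩` of finite-dimensional `K⟨X,Y⟩`-modules:
a finite-dimensional `K`-vector space with two endomorphisms `X`, `Y`. -/
structure KXYObj (K : Type) [Field K] : Type 1 where
  V : Type
  [isAddCommGroup : AddCommGroup V]
  [isModule : Module K V]
  fd : FiniteDimensional K V
  X : V →ₗ[K] V
  Y : V →ₗ[K] V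

attribute [instance] KXYObj.isAddCommGroup KXYObj.isModule

/-- Morphisms of `K⟨X,Y⟩`-modules: `K`-linear maps intertwining the two
endomorphisms; they form an additive group. -/
def KXYHom {K : Type} [Field K] (M N : KXYObj K) : AddSubgroup (M.V →ₗ[K] N.V) where
  carrier := {f | f ∘ₗ M.X = N.X ∘ₗ f ∧ f ∘ₗ M.Y = N.Y ∘ₗ f}
  zero_mem' := by constructor <;> ext v <;> simp
  add_mem' := by
    rintro f g ⟨hf1, hf2⟩ ⟨hg1, hg2⟩
    constructor
    · rw [LinearMap.add_comp, LinearMap.comp_add, hf1, hg1]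
    · rw [LinearMap.add_comp, LinearMap.comp_add, hf2, hg2]
  neg_mem' := by
    rintro f ⟨hf1, hf2⟩
    constructor
    · rw [LinearMap.neg_comp, LinearMap.comp_neg, hf1]
    · rw [LinearMap.neg_comp, LinearMap.comp_neg, hf2]

/-- The category `mod K⟨X,Y⟩`. -/
instance KXYCat (K : Type) [Field K] : Category (KXYObj K) where
  Hom M N := ↥(KXYHom M N)
  id M := ⟨LinearMap.id, by constructor <;> ext v <;> simp⟩
  comp f g := ⟨g.1 ∘ₗ f.1, by
    have hf1 := f.2.1
    have hf2 := f.2.2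
    have hg1 := g.2.1
    have hg2 := g.2.2
    constructor
    · rw [LinearMap.comp_assoc, hf1, ← LinearMap.comp_assoc, hg1, LinearMap.comp_assoc]
    · rw [LinearMap.comp_assoc, hf2, ← LinearMap.comp_assoc, hg2, LinearMap.comp_assoc]⟩
  id_comp f := Subtype.ext (LinearMap.comp_id _)
  comp_id f := Subtype.ext (LinearMap.id_comp _)
  assoc f g h := Subtype.ext rfl

instance (K : Type) [Field K] : Preadditive (KXYObj K) where
  homGroup M N := inferInstanceAs (AddCommGroup ↥(KXYHom M N))
  add_comp M N P f g h := Subtype.ext (LinearMap.comp_add _ _ _)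
  comp_add M N P f g h := Subtype.ext (LinearMap.add_comp _ _ _)


lemma socle_exists {Λ : Type} [CommRing Λ] (t : Λ) (n : ℕ) (htn : t ^ n = 0)
    {M : Type} [AddCommGroup M] [Module Λ M] {x : M} (hx : x ≠ 0) :
    ∃ s : M, s ≠ 0 ∧ t • s = 0 := by
  have h : ∃ k, t ^ k • x = 0 := ⟨n, by rw [htn, zero_smul]⟩
  classical
  have hk : t ^ (Nat.find h) • x = 0 := Nat.find_spec h
  have hkpos : Nat.find h ≠ 0 := by
    intro h0
    rw [h0, pow_zero, one_smul] at hk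
    exact hx hk
  refine ⟨t ^ (Nat.find h - 1) • x, ?_, ?_⟩
  · exact Nat.find_min h (Nat.sub_lt (Nat.pos_of_ne_zero hkpos) one_pos)
  · rw [← mul_smul, ← pow_succ', Nat.sub_add_cancel (Nat.pos_of_ne_zero hkpos)]
    exact hk

lemma exists_not_mem_smul {Λ : Type} [CommRing Λ] (t : Λ) (n : ℕ) (htn : t ^ n = 0)
    {M : Type} [AddCommGroup M] [Module Λ M] {x : M} (hx : x ≠ 0) :
    ∃ b : M, b ∉ (Ideal.span {t} • ⊤ : Submodule Λ M) := by
  by_contra hcon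
  push_neg at hcon
  have htop : (⊤ : Submodule Λ M) ≤ Ideal.span {t} • ⊤ := fun m _ => hcon m
  have hn : ∀ k : ℕ, (⊤ : Submodule Λ M) ≤ (Ideal.span {t}) ^ k • ⊤ := by
    intro k
    induction k with
    | zero => simp
    | succ k ih =>
      calc (⊤ : Submodule Λ M) ≤ (Ideal.span {t}) ^ k • ⊤ := ih
        _ ≤ (Ideal.span {t}) ^ k • (Ideal.span {t} • ⊤) := Submodule.smul_mono le_rfl htop
        _ = (Ideal.span {t}) ^ (k+1) • ⊤ := by
            rw [pow_succ, ← Ideal.smul_eq_mul, Submodule.smul_assoc]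
  have h0 : (Ideal.span {t} : Ideal Λ) ^ n = ⊥ := by
    rw [Ideal.span_singleton_pow, htn, Ideal.span_singleton_eq_bot.mpr rfl]
  have h2 := hn n
  rw [h0, Submodule.bot_smul, le_bot_iff] at h2
  exact hx (by rw [← Submodule.mem_bot (R := Λ), ← h2]; trivial)

lemma exists_map {Λ : Type} [CommRing Λ] [IsLocalRing Λ] {t : Λ}
    (hmax : IsLocalRing.maximalIdeal Λ = Ideal.span {t})
    {M N : Type} [AddCommGroup M] [Module Λ M] [AddCommGroup N] [Module Λ N]
    {b : M} (hb : b ∉ (Ideal.span {t} • ⊤ : Submodule Λ M))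
    {s : N} (hs : t • s = 0) :
    ∃ g : M →ₗ[Λ] N, g b = s ∧ ∀ x, ∃ c : Λ, g x = c • s := by
  set I : Ideal Λ := Ideal.span {t} with hI
  haveI : I.IsMaximal := hmax ▸ IsLocalRing.maximalIdeal.isMaximal Λ
  letI k := Λ ⧸ I
  letI : Field k := Ideal.Quotient.field I
  letI : Module k (M ⧸ (I • ⊤ : Submodule Λ M)) :=
    inferInstanceAs (Module (Λ ⧸ I) (M ⧸ I • (⊤ : Submodule Λ M)))
  letI : IsScalarTower Λ k (M ⧸ (I • ⊤ : Submodule Λ M)) :=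
    inferInstanceAs (IsScalarTower Λ (Λ ⧸ I) (M ⧸ I • (⊤ : Submodule Λ M)))
  set Q := M ⧸ (I • ⊤ : Submodule Λ M)
  set bq : Q := Submodule.Quotient.mk b with hbq
  have hbq0 : bq ≠ 0 := by
    rw [hbq, Ne, Submodule.Quotient.mk_eq_zero]
    exact hb
  let j : k →ₗ[k] Q := LinearMap.toSpanSingleton k Q bq
  have hjinj : LinearMap.ker j = ⊥ := by
    rw [LinearMap.ker_eq_bot]
    intro c d hcd
    simp only [j, LinearMap.toSpanSingleton_apply] at hcd
    have h2 := sub_eq_zero.mpr hcd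
    rw [← sub_smul] at h2
    rcases smul_eq_zero.mp h2 with h | h
    · exact sub_eq_zero.mp h
    · exact absurd h hbq0
  obtain ⟨ψ, hψ⟩ := j.exists_leftInverse_of_injective hjinj
  have hψb : ψ bq = 1 := by
    have h3 := congrArg (fun f => f (1:k)) hψ
    simpa [j] using h3
  let σ : (Λ ⧸ I) →ₗ[Λ] N := Submodule.liftQ I (LinearMap.toSpanSingleton Λ N s) (by
    intro a ha
    rw [hI, Ideal.mem_span_singleton] at ha
    obtain ⟨c, rfl⟩ := ha
    simp only [LinearMap.mem_ker, LinearMap.toSpanSingleton_apply]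
    rw [mul_comm, mul_smul, hs, smul_zero])
  have hσ : ∀ c : Λ, σ (Submodule.Quotient.mk c) = c • s := fun c => rfl
  let g : M →ₗ[Λ] N := σ ∘ₗ (ψ.restrictScalars Λ) ∘ₗ (Submodule.mkQ (I • ⊤ : Submodule Λ M))
  have hg : ∀ x : M, g x = σ (ψ (Submodule.Quotient.mk x)) := fun x => rfl
  refine ⟨g, ?_, ?_⟩
  · rw [hg, ← hbq, hψb]
    exact hσ 1 |>.trans (one_smul _ _)
  · intro x
    obtain ⟨c, hc⟩ := Submodule.mkQ_surjective I (ψ (Submodule.Quotient.mk x))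
    exact ⟨c, by rw [hg, ← hc]; exact hσ c⟩

lemma no_KxK (Λ : Type) [CommRing Λ] [IsLocalRing Λ] (t : Λ) (n : ℕ)
    (hmax : IsLocalRing.maximalIdeal Λ = Ideal.span {t})
    (htn : t ^ n = 0) (K : Type) [Field K]
    (B : Type) [AddCommGroup B] [Module Λ B] (A : Submodule Λ B) :
    ¬ Nonempty (pairEnd Λ B A ≃+* K × K) := by
  rintro ⟨φ⟩
  set R := pairEnd Λ B A with hR
  set ε : R := φ.symm (1, 0) with hε
  set ε' : R := φ.symm (0, 1) with hε'
  have hφε : φ ε = (1, 0) := φ.apply_symm_apply _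
  have hφε' : φ ε' = (0, 1) := φ.apply_symm_apply _
  have hε2 : ε * ε = ε := by
    apply φ.injective; rw [map_mul, hφε]; ext <;> simp
  have hε'2 : ε' * ε' = ε' := by
    apply φ.injective; rw [map_mul, hφε']; ext <;> simp
  have hεne : ε ≠ 0 := by
    intro h0
    have := congrArg φ h0
    rw [hφε, map_zero] at this
    exact one_ne_zero (congrArg Prod.fst this)
  have hε'ne : ε' ≠ 0 := by
    intro h0
    have := congrArg φ h0
    rw [hφε', map_zero] at this
    exact one_ne_zero (congrArg Prod.snd this)
  have key1 : ∀ f : R, ε' * f * ε = 0 := by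
    intro f
    apply φ.injective
    rw [map_mul, map_mul, hφε, hφε', map_zero]
    ext <;> simp
  have key2 : ∀ f : R, ε * f * ε' = 0 := by
    intro f
    apply φ.injective
    rw [map_mul, map_mul, hφε, hφε', map_zero]
    ext <;> simp
  -- underlying endomorphisms
  set e : Module.End Λ B := (ε : Module.End Λ B) with he
  set e' : Module.End Λ B := (ε' : Module.End Λ B) with he'
  have he2 : ∀ x, e (e x) = e x := by
    intro x
    have := congrArg Subtype.val hε2
    exact congrArg (fun (f : Module.End Λ B) => f x) this
  have he'2 : ∀ x, e' (e' x) = e' x := by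
    intro x
    have := congrArg Subtype.val hε'2
    exact congrArg (fun (f : Module.End Λ B) => f x) this
  have hrange : ∀ x ∈ LinearMap.range e, e x = x := by
    rintro _ ⟨y, rfl⟩; exact he2 y
  have hrange' : ∀ x ∈ LinearMap.range e', e' x = x := by
    rintro _ ⟨y, rfl⟩; exact he'2 y
  have hene : ∃ x, e x ≠ 0 := by
    by_contra hc
    push_neg at hc
    exact hεne (Subtype.ext (LinearMap.ext hc))
  have he'ne : ∃ x, e' x ≠ 0 := by
    by_contra hc
    push_neg at hc
    exact hε'ne (Subtype.ext (LinearMap.ext hc))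
  by_cases hA2 : A ⊓ LinearMap.range e' = ⊥
  · -- A₂ = ⊥ : use a map (range e') → (socle of range e)
    obtain ⟨x₀, hx₀⟩ := hene
    have hx₀' : (⟨e x₀, LinearMap.mem_range_self e x₀⟩ : LinearMap.range e) ≠ 0 := by
      intro hh; exact hx₀ (congrArg Subtype.val hh)
    obtain ⟨s', hs'ne, hs't⟩ := socle_exists t n htn (M := LinearMap.range e) hx₀'
    obtain ⟨y₀, hy₀⟩ := he'ne
    have hy₀' : (⟨e' y₀, LinearMap.mem_range_self e' y₀⟩ : LinearMap.range e') ≠ 0 := by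
      intro hh; exact hy₀ (congrArg Subtype.val hh)
    obtain ⟨b', hb'⟩ := exists_not_mem_smul t n htn (M := LinearMap.range e') hy₀'
    have hst : t • (s' : B) = 0 := by
      have := congrArg Subtype.val hs't; exact this
    obtain ⟨g, hgb, _⟩ := exists_map hmax (N := B) hb' hst
    set f : Module.End Λ B := g ∘ₗ e'.rangeRestrict with hf
    have hfA : ∀ a ∈ A, f a ∈ A := by
      intro a ha
      have hmem : e' a ∈ A ⊓ LinearMap.range e' :=
        ⟨ε'.2 a ha, LinearMap.mem_range_self e' a⟩
      rw [hA2] at hmem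
      have : e'.rangeRestrict a = 0 := Subtype.ext hmem
      show g (e'.rangeRestrict a) ∈ A
      rw [this, map_zero]
      exact A.zero_mem
    set fR : R := ⟨f, hfA⟩ with hfR
    have hzero := key2 fR
    have happ : ((ε * fR * ε' : R) : Module.End Λ B) (b' : B) = (s' : B) := by
      show e (f (e' (b' : B))) = (s' : B)
      rw [hrange' _ b'.2]
      have : e'.rangeRestrict (b' : B) = b' := Subtype.ext (hrange' _ b'.2)
      show e (g (e'.rangeRestrict (b' : B))) = (s' : B)
      rw [this, hgb]
      exact hrange _ s'.2
    rw [hzero] at happ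
    exact hs'ne (Subtype.ext happ.symm)
  · -- A₂ ≠ ⊥ : a socle element of A₂ and a map (range e) → Λ•s
    obtain ⟨x₀, hx₀A, hx₀ne⟩ := (Submodule.ne_bot_iff _).mp hA2
    have hx₀' : (⟨x₀, hx₀A⟩ : (A ⊓ LinearMap.range e' : Submodule Λ B)) ≠ 0 := by
      intro hh; exact hx₀ne (congrArg Subtype.val hh)
    obtain ⟨s', hs'ne, hs't⟩ :=
      socle_exists t n htn (M := (A ⊓ LinearMap.range e' : Submodule Λ B)) hx₀'
    have hst : t • (s' : B) = 0 := congrArg Subtype.val hs't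
    have hsA : (s' : B) ∈ A := s'.2.1
    have hsr : (s' : B) ∈ LinearMap.range e' := s'.2.2
    obtain ⟨y₀, hy₀⟩ := hene
    have hy₀' : (⟨e y₀, LinearMap.mem_range_self e y₀⟩ : LinearMap.range e) ≠ 0 := by
      intro hh; exact hy₀ (congrArg Subtype.val hh)
    obtain ⟨b', hb'⟩ := exists_not_mem_smul t n htn (M := LinearMap.range e) hy₀'
    obtain ⟨g, hgb, hgr⟩ := exists_map hmax (N := B) hb' hst
    set f : Module.End Λ B := g ∘ₗ e.rangeRestrict with hf
    have hfA : ∀ a ∈ A, f a ∈ A := by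
      intro a ha
      show g (e.rangeRestrict a) ∈ A
      obtain ⟨c, hc⟩ := hgr (e.rangeRestrict a)
      rw [hc]
      exact A.smul_mem c hsA
    set fR : R := ⟨f, hfA⟩ with hfR
    have hzero := key1 fR
    have happ : ((ε' * fR * ε : R) : Module.End Λ B) (b' : B) = (s' : B) := by
      show e' (f (e (b' : B))) = (s' : B)
      rw [hrange _ b'.2]
      have : e.rangeRestrict (b' : B) = b' := Subtype.ext (hrange _ b'.2)
      show e' (g (e.rangeRestrict (b' : B))) = (s' : B)
      rw [this, hgb]
      exact hrange' _ hsr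
    rw [hzero] at happ
    exact hs'ne (Subtype.ext happ.symm)


/-- The test object of `mod K⟨X,Y⟩` whose endomorphism ring is `K × K`. -/
def Nobj (K : Type) [Field K] : KXYObj K where
  V := K × K
  fd := inferInstance
  X := LinearMap.prodMap LinearMap.id 0
  Y := 0

lemma Nobj_end (K : Type) [Field K] : Nonempty (End (Nobj K) ≃+* K × K) := by
  have hX : ∀ (f : End (Nobj K)) (v : K × K),
      f.1 ((Nobj K).X v) = (Nobj K).X (f.1 v) := by
    intro f v
    exact congrArg (fun (g : (Nobj K).V →ₗ[K] (Nobj K).V) => g v) f.2.1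
  have hsnd : ∀ f : End (Nobj K), f.1 (1, 0) = ((f.1 (1,0)).1, 0) := by
    intro f
    exact hX f (1, 0)
  have hfst : ∀ f : End (Nobj K), f.1 (0, 1) = (0, (f.1 (0,1)).2) := by
    intro f
    have h : f.1 (((0:K), (0:K)) : K × K) = ((f.1 ((0:K),(1:K))).1, (0:K)) := hX f (0, 1)
    have h0 : f.1 (((0:K), (0:K)) : K × K) = 0 := by
      have : (((0:K), (0:K)) : K × K) = 0 := rfl
      rw [this]; exact map_zero f.1
    rw [h0] at h
    have hh : (f.1 ((0:K),(1:K))).1 = 0 := by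
      have := congrArg Prod.fst h
      exact this.symm
    exact Prod.ext hh rfl
  have hdecomp : ∀ (f : End (Nobj K)) (x y : K),
      f.1 (x, y) = (x * (f.1 (1,0)).1, y * (f.1 (0,1)).2) := by
    intro f x y
    have hxy : ((x, y) : K × K) = x • ((1:K), (0:K)) + y • ((0:K), (1:K)) := by
      ext <;> simp
    rw [hxy]; erw [map_add, map_smul, map_smul, hsnd f, hfst f]
    apply Prod.ext
    · show x • (f.1 (1,0)).1 + y • (0:K) = x * (f.1 (1,0)).1
      simp [mul_comm]
    · show x • (0:K) + y • (f.1 (0,1)).2 = y * (f.1 (0,1)).2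
      simp [mul_comm]
  have hmem : ∀ p : K × K,
      LinearMap.prodMap (p.1 • LinearMap.id) (p.2 • LinearMap.id) ∈ KXYHom (Nobj K) (Nobj K) := by
    intro p
    constructor
    · apply LinearMap.ext
      rintro ⟨x, y⟩
      show ((p.1 • x, p.2 • (0:K)) : K × K) = (p.1 • x, (0:K))
      simp
    · apply LinearMap.ext
      rintro ⟨x, y⟩
      show ((p.1 • (0:K), p.2 • (0:K)) : K × K) = ((0:K), (0:K))
      simp
  refine ⟨{
    toFun := fun f => ((f.1 (1, 0)).1, (f.1 (0, 1)).2)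
    invFun := fun p => ⟨LinearMap.prodMap (p.1 • LinearMap.id) (p.2 • LinearMap.id), hmem p⟩
    left_inv := ?_
    right_inv := ?_
    map_mul' := ?_
    map_add' := ?_ }⟩
  · intro f
    apply Subtype.ext
    apply LinearMap.ext
    rintro ⟨x, y⟩
    show ((((f.1 (1,0)).1 • x, (f.1 (0,1)).2 • y)) : K × K) = f.1 (x, y)
    rw [hdecomp f x y]
    ext <;> simp [mul_comm]
  · rintro ⟨a, b⟩
    show ((((a • LinearMap.id).prodMap (b • LinearMap.id)) ((1:K),(0:K))).1,
      (((a • LinearMap.id).prodMap (b • LinearMap.id)) ((0:K),(1:K))).2) = (a, b)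
    ext <;> simp
  · intro f g
    have hmul1 : (f * g).1 (1,0) = f.1 (g.1 (1,0)) := rfl
    have hmul2 : (f * g).1 (0,1) = f.1 (g.1 (0,1)) := rfl
    show (((f * g).1 (1,0)).1, ((f * g).1 (0,1)).2)
        = ((f.1 (1,0)).1, (f.1 (0,1)).2) * ((g.1 (1,0)).1, (g.1 (0,1)).2)
    rw [hmul1, hmul2]
    have h1 := hdecomp f (g.1 (1,0)).1 (g.1 (1,0)).2
    erw [Prod.mk.eta] at h1
    have h2 := hdecomp f (g.1 (0,1)).1 (g.1 (0,1)).2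
    erw [Prod.mk.eta] at h2
    rw [h1, h2]
    ext <;> simp [mul_comm]
  · intro f g
    have h1 : (f + g).1 (1,0) = f.1 (1,0) + g.1 (1,0) := rfl
    have h2 : (f + g).1 (0,1) = f.1 (0,1) + g.1 (0,1) := rfl
    show (((f + g).1 (1,0)).1, ((f + g).1 (0,1)).2)
        = ((f.1 (1,0)).1, (f.1 (0,1)).2) + ((g.1 (1,0)).1, (g.1 (0,1)).2)
    rw [h1, h2]
    ext <;> exact rfl

lemma SObj_end (Λ : Type) [CommRing Λ] (P : SObj Λ) :
    Nonempty (End P ≃+* pairEnd Λ P.carrier P.sub) := by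
  refine ⟨{
    toFun := fun f => ⟨f.1, f.2⟩
    invFun := fun g => ⟨g.1, g.2⟩
    left_inv := fun f => rfl
    right_inv := fun g => rfl
    map_mul' := fun f g => rfl
    map_add' := fun f g => rfl }⟩

/-- There is no object `(A ⊆ B)` of `S(Λ)` whose endomorphism ring is isomorphic to
`K × K` for a field `K`; consequently `S(Λ)` admits no full additive embedding of
`mod K⟨X,Y⟩`, i.e. `S(Λ)` is not strictly `K`-wild, for any field `K`. -/
theorem S_Lambda_not_strictly_wild
    (Λ : Type) [CommRing Λ] [IsLocalRing Λ] (t : Λ) (n : ℕ)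
    (hmax : IsLocalRing.maximalIdeal Λ = Ideal.span {t})
    (htn : t ^ n = 0) (htn1 : t ^ (n - 1) ≠ 0)
    (K : Type) [Field K] :
    (∀ (B : Type) (_ : AddCommGroup B) (_ : Module Λ B) (_ : Module.Finite Λ B)
        (A : Submodule Λ B), ¬ Nonempty (pairEnd Λ B A ≃+* K × K)) ∧
    ¬ ∃ F : KXYObj K ⥤ SObj Λ, F.Full ∧ F.Faithful ∧ F.Additive := by
  have part1 : ∀ (B : Type) (_ : AddCommGroup B) (_ : Module Λ B) (_ : Module.Finite Λ B)
      (A : Submodule Λ B), ¬ Nonempty (pairEnd Λ B A ≃+* K × K) := by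
    intro B _ _ _ A
    exact no_KxK Λ t n hmax htn K B A
  refine ⟨part1, ?_⟩
  rintro ⟨F, hFull, hFaith, hAdd⟩
  haveI := hFull; haveI := hFaith; haveI := hAdd
  obtain ⟨α⟩ := Nobj_end K
  obtain ⟨β⟩ := SObj_end Λ (F.obj (Nobj K))
  let mapHom : End (Nobj K) →+* End (F.obj (Nobj K)) := {
    toFun := fun f => F.map f
    map_one' := F.map_id (Nobj K)
    map_mul' := fun f g => F.map_comp g f
    map_zero' := F.map_zero _ _
    map_add' := fun f g => F.map_add }
  have hbij : Function.Bijective mapHom :=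
    ⟨fun f g h => F.map_injective h, fun g => F.map_surjective g⟩
  let γ : End (Nobj K) ≃+* End (F.obj (Nobj K)) := RingEquiv.ofBijective mapHom hbij
  exact part1 (F.obj (Nobj K)).carrier (F.obj (Nobj K)).isAddCommGroup
    (F.obj (Nobj K)).isModule (F.obj (Nobj K)).fin (F.obj (Nobj K)).sub
    ⟨(β.symm.trans γ.symm).trans α⟩
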